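/- Let G be a locally compact second countable topological group with left Haar measure m, let B be a Banach space, and let π : G → L(B,B) be a group homomorphism into bounded linear operators with ‖π(g)‖ ≤ 1 for all g, such that for every x ∈ B the map g ↦ π(g)x is strongly measurable. Let F_N and F_K be compact subsets of G of positive finite Haar measure and let 0 < η. Assume there exists a measurable F_N' ⊆ F_N with m(F_N ∖ F_N') < η·m(F_N) such that m(F_K Δ hF_K) < η·m(F_K) for every h ∈ F_N'. Define A_N x := (1/m(F_N)) ∫_{F_N} π(g⁻¹)x dm(g) and A_K x := (1/m(F_K)) ∫_{F_K} π(g⁻¹)x dm(g) (Bochner integrals). Then for every x ∈ B, ‖A_K x − A_K (A_N x)‖ ≤ 3η ‖x‖. -/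

import Mathlib

open MeasureTheory Filter Pointwise

section Aux

variable {G : Type*} [TopologicalSpace G] [R1Space G] [MeasurableSpace G] [BorelSpace G]

/-- For a compact set `K` in an R₁ space, restricting a Borel measure to `closure K` is the
same as restricting to `K`. -/
lemma stmt_15_restrict_closure (μ : Measure G) {K : Set G} (hK : IsCompact K) :
    μ.restrict (closure K) = μ.restrict K := by
  ext s hs
  rw [Measure.restrict_apply hs, Measure.restrict_apply hs]
  refine le_antisymm ?_ (measure_mono (Set.inter_subset_inter_right s subset_closure))
  refine le_trans (measure_mono ?_) (measure_toMeasurable (s ∩ K)).le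
  rintro y ⟨hys, hyc⟩
  rw [hK.closure_eq_biUnion_inseparable] at hyc
  simp only [Set.mem_iUnion, Set.mem_setOf_eq] at hyc
  obtain ⟨x, hxK, hxy⟩ := hyc
  have hxs : x ∈ s := (hxy.mem_measurableSet_iff hs).2 hys
  exact (hxy.mem_measurableSet_iff (measurableSet_toMeasurable μ _)).1
    (subset_toMeasurable μ _ ⟨hxs, hxK⟩)

/-- The symmetric difference of closures of compact sets is not bigger in measure than the
symmetric difference of the sets themselves. -/
lemma stmt_15_symmDiff_closure (μ : Measure G) {s t : Set G}
    (hs : IsCompact s) (ht : IsCompact t) :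
    μ (symmDiff (closure s) (closure t)) ≤ μ (symmDiff s t) := by
  refine le_trans (measure_mono ?_) (measure_toMeasurable (symmDiff s t)).le
  have hm := measurableSet_toMeasurable μ (symmDiff s t)
  intro y hy
  rw [Set.mem_symmDiff] at hy
  rcases hy with ⟨hy1, hy2⟩ | ⟨hy1, hy2⟩
  · rw [hs.closure_eq_biUnion_inseparable] at hy1
    simp only [Set.mem_iUnion, Set.mem_setOf_eq] at hy1
    obtain ⟨x, hxs, hxy⟩ := hy1
    have hxt : x ∉ t := fun hxt =>
      hy2 ((hxy.mem_closed_iff isClosed_closure).1 (subset_closure hxt))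
    exact (hxy.mem_measurableSet_iff hm).1
      (subset_toMeasurable μ _ (Set.mem_symmDiff.2 (Or.inl ⟨hxs, hxt⟩)))
  · rw [ht.closure_eq_biUnion_inseparable] at hy1
    simp only [Set.mem_iUnion, Set.mem_setOf_eq] at hy1
    obtain ⟨x, hxt, hxy⟩ := hy1
    have hxs : x ∉ s := fun hxs =>
      hy2 ((hxy.mem_closed_iff isClosed_closure).1 (subset_closure hxs))
    exact (hxy.mem_measurableSet_iff hm).1
      (subset_toMeasurable μ _ (Set.mem_symmDiff.2 (Or.inr ⟨hxt, hxs⟩)))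

end Aux

/-- The main argument, assuming the sets involved are measurable. -/
lemma stmt_15_aux {G : Type*} [Group G] [TopologicalSpace G] [IsTopologicalGroup G]
    [LocallyCompactSpace G] [SecondCountableTopology G]
    [MeasurableSpace G] [BorelSpace G]
    (μ : Measure G) [μ.IsHaarMeasure]
    {B : Type*} [NormedAddCommGroup B] [NormedSpace ℝ B] [CompleteSpace B]
    (π : G →* (B →L[ℝ] B)) (hπ : ∀ g : G, ‖π g‖ ≤ 1)
    (hmeas : ∀ x : B, StronglyMeasurable fun g => π g x)
    (FN FK : Set G) (hFNm : MeasurableSet FN) (hFKm : MeasurableSet FK)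
    (hFKsm : ∀ h : G, MeasurableSet (h • FK))
    (hFNpos : 0 < μ FN) (hFNfin : μ FN < ⊤) (hFKpos : 0 < μ FK) (hFKfin : μ FK < ⊤)
    (hFKsfin : ∀ h : G, μ (h • FK) < ⊤)
    (η : ℝ) (hη : 0 < η)
    (FN' : Set G) (hFN'sub : FN' ⊆ FN) (hFN'meas : MeasurableSet FN')
    (hFN'small : μ (FN \ FN') < ENNReal.ofReal η * μ FN)
    (hfolner : ∀ h ∈ FN', μ (symmDiff FK (h • FK)) < ENNReal.ofReal η * μ FK)
    (x : B) :
    ‖((μ FK).toReal⁻¹ • ∫ g in FK, π g⁻¹ x ∂μ) -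
      ((μ FK).toReal⁻¹ • ∫ g in FK, π g⁻¹ ((μ FN).toReal⁻¹ • ∫ h in FN, π h⁻¹ x ∂μ) ∂μ)‖
      ≤ 3 * η * ‖x‖ := by
  set f : G → B := fun g => π g⁻¹ x with hf_def
  set cK : ℝ := (μ FK).toReal⁻¹ with hcK
  set cN : ℝ := (μ FN).toReal⁻¹ with hcN
  have hμKpos : 0 < (μ FK).toReal := ENNReal.toReal_pos hFKpos.ne' hFKfin.ne
  have hμNpos : 0 < (μ FN).toReal := ENNReal.toReal_pos hFNpos.ne' hFNfin.ne
  have hfb : ∀ g, ‖f g‖ ≤ ‖x‖ := fun g =>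
    ((π g⁻¹).le_opNorm x).trans (mul_le_of_le_one_left (norm_nonneg x) (hπ g⁻¹))
  have hfm : StronglyMeasurable f := (hmeas x).comp_measurable measurable_inv
  have hint : ∀ s : Set G, μ s < ⊤ → IntegrableOn f s μ := fun s hs =>
    Integrable.mono' (integrableOn_const hs.ne) hfm.aestronglyMeasurable.restrict
      (Eventually.of_forall fun g => hfb g)
  -- the shifted integral
  have hshift : ∀ h : G, ∫ g in FK, f (h * g) ∂μ = ∫ u in h • FK, f u ∂μ := by
    intro h
    have himg : h • FK = (fun g => h * g) '' FK := by
      ext u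
      simp only [Set.mem_smul_set, smul_eq_mul, Set.mem_image]
    rw [himg, (measurePreserving_mul_left μ h).setIntegral_image_emb
      (MeasurableEquiv.mulLeft h).measurableEmbedding f FK]
  -- key per-h bound
  have key : ∀ h ∈ FN', ‖(∫ g in FK, f g ∂μ) - ∫ g in FK, f (h * g) ∂μ‖
      ≤ η * (μ FK).toReal * ‖x‖ := by
    intro h hh
    have hsm : MeasurableSet (h • FK) := hFKsm h
    have hsfin : μ (h • FK) < ⊤ := hFKsfin h
    have hd1 : μ (FK \ h • FK) < ⊤ :=
      lt_of_le_of_lt (measure_mono Set.diff_subset) hFKfin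
    have hd2 : μ (h • FK \ FK) < ⊤ :=
      lt_of_le_of_lt (measure_mono Set.diff_subset) hsfin
    have hsplit1 : ∫ g in FK, f g ∂μ
        = (∫ g in FK ∩ h • FK, f g ∂μ) + ∫ g in FK \ h • FK, f g ∂μ := by
      rw [← setIntegral_union (Set.disjoint_sdiff_right.mono_left Set.inter_subset_right)
        (hFKm.diff hsm)
        ((hint FK hFKfin).mono_set Set.inter_subset_left)
        ((hint FK hFKfin).mono_set Set.diff_subset), Set.inter_union_diff]
    have hsplit2 : ∫ g in h • FK, f g ∂μ
        = (∫ g in FK ∩ h • FK, f g ∂μ) + ∫ g in h • FK \ FK, f g ∂μ := by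
      rw [← setIntegral_union (Set.disjoint_sdiff_right.mono_left Set.inter_subset_left)
        (hsm.diff hFKm)
        ((hint _ hsfin).mono_set Set.inter_subset_right)
        ((hint _ hsfin).mono_set Set.diff_subset)]
      congr 1
      rw [Set.inter_comm, Set.inter_union_diff]
    rw [hshift h, hsplit1, hsplit2]
    have hb1 : ‖∫ g in FK \ h • FK, f g ∂μ‖ ≤ ‖x‖ * (μ (FK \ h • FK)).toReal :=
      norm_setIntegral_le_of_norm_le_const hd1 (fun g _ => hfb g)
    have hb2 : ‖∫ g in h • FK \ FK, f g ∂μ‖ ≤ ‖x‖ * (μ (h • FK \ FK)).toReal :=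
      norm_setIntegral_le_of_norm_le_const hd2 (fun g _ => hfb g)
    have hsymm : (μ (FK \ h • FK)).toReal + (μ (h • FK \ FK)).toReal
        ≤ η * (μ FK).toReal := by
      have hμs : μ (symmDiff FK (h • FK)) = μ (FK \ h • FK) + μ (h • FK \ FK) := by
        rw [symmDiff_def]
        exact measure_union disjoint_sdiff_sdiff (hsm.diff hFKm)
      have hle : μ (FK \ h • FK) + μ (h • FK \ FK) ≤ ENNReal.ofReal η * μ FK := by
        rw [← hμs]; exact (hfolner h hh).le
      have hfin : ENNReal.ofReal η * μ FK < ⊤ :=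
        ENNReal.mul_lt_top ENNReal.ofReal_lt_top hFKfin
      calc (μ (FK \ h • FK)).toReal + (μ (h • FK \ FK)).toReal
          = (μ (FK \ h • FK) + μ (h • FK \ FK)).toReal :=
            (ENNReal.toReal_add hd1.ne hd2.ne).symm
        _ ≤ (ENNReal.ofReal η * μ FK).toReal := ENNReal.toReal_mono hfin.ne hle
        _ = η * (μ FK).toReal := by
            rw [ENNReal.toReal_mul, ENNReal.toReal_ofReal hη.le]
    calc ‖((∫ g in FK ∩ h • FK, f g ∂μ) + ∫ g in FK \ h • FK, f g ∂μ) -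
          ((∫ g in FK ∩ h • FK, f g ∂μ) + ∫ g in h • FK \ FK, f g ∂μ)‖
        = ‖(∫ g in FK \ h • FK, f g ∂μ) - ∫ g in h • FK \ FK, f g ∂μ‖ := by
          congr 1; abel
      _ ≤ ‖∫ g in FK \ h • FK, f g ∂μ‖ + ‖∫ g in h • FK \ FK, f g ∂μ‖ := norm_sub_le _ _
      _ ≤ ‖x‖ * (μ (FK \ h • FK)).toReal + ‖x‖ * (μ (h • FK \ FK)).toReal :=
          add_le_add hb1 hb2
      _ = ((μ (FK \ h • FK)).toReal + (μ (h • FK \ FK)).toReal) * ‖x‖ := by ring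
      _ ≤ (η * (μ FK).toReal) * ‖x‖ := mul_le_mul_of_nonneg_right hsymm (norm_nonneg x)
      _ = η * (μ FK).toReal * ‖x‖ := by ring
  -- commute π g⁻¹ with inner integral
  have hinner : ∀ g : G, π g⁻¹ (cN • ∫ h in FN, f h ∂μ)
      = cN • ∫ h in FN, f (h * g) ∂μ := by
    intro g
    rw [ContinuousLinearMap.map_smul]
    congr 1
    rw [← ContinuousLinearMap.integral_comp_comm (π g⁻¹) (hint FN hFNfin)]
    refine setIntegral_congr_fun hFNm fun h _ => ?_
    show π g⁻¹ (π h⁻¹ x) = π (h * g)⁻¹ x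
    rw [mul_inv_rev, map_mul, ContinuousLinearMap.mul_apply]
  haveI : Fact (μ FK < ⊤) := ⟨hFKfin⟩
  haveI : Fact (μ FN < ⊤) := ⟨hFNfin⟩
  -- Fubini
  have hF2m : StronglyMeasurable (fun p : G × G => f (p.2 * p.1)) :=
    hfm.comp_measurable (measurable_snd.mul measurable_fst)
  have hF2int : Integrable (Function.uncurry fun g h => f (h * g))
      ((μ.restrict FK).prod (μ.restrict FN)) :=
    Integrable.mono' (integrable_const ‖x‖) hF2m.aestronglyMeasurable
      (Eventually.of_forall fun p => hfb _)
  have hswap : ∫ g in FK, ∫ h in FN, f (h * g) ∂μ ∂μ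
      = ∫ h in FN, ∫ g in FK, f (h * g) ∂μ ∂μ :=
    integral_integral_swap hF2int
  -- measurable bounded family h ↦ ∫_{FK} f (h g) dg
  have hIm : StronglyMeasurable (fun h => ∫ g in FK, f (h * g) ∂μ) :=
    (hfm.comp_measurable (measurable_fst.mul measurable_snd) :
      StronglyMeasurable fun p : G × G => f (p.1 * p.2)).integral_prod_right'
  have hIb : ∀ h : G, ‖∫ g in FK, f (h * g) ∂μ‖ ≤ ‖x‖ * (μ FK).toReal := fun h =>
    norm_setIntegral_le_of_norm_le_const hFKfin (fun g _ => hfb (h * g))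
  set D : G → B := fun h => (∫ g in FK, f g ∂μ) - ∫ g in FK, f (h * g) ∂μ with hD_def
  have hDm : StronglyMeasurable D := stronglyMeasurable_const.sub hIm
  have hDb : ∀ h : G, ‖D h‖ ≤ 2 * (‖x‖ * (μ FK).toReal) := by
    intro h
    calc ‖D h‖ ≤ ‖∫ g in FK, f g ∂μ‖ + ‖∫ g in FK, f (h * g) ∂μ‖ := norm_sub_le _ _
      _ ≤ ‖x‖ * (μ FK).toReal + ‖x‖ * (μ FK).toReal := by
          refine add_le_add ?_ (hIb h)
          exact norm_setIntegral_le_of_norm_le_const hFKfin (fun g _ => hfb g)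
      _ = 2 * (‖x‖ * (μ FK).toReal) := by ring
  have hDint : ∀ s : Set G, μ s < ⊤ → IntegrableOn D s μ := fun s hs =>
    Integrable.mono' (integrableOn_const hs.ne) hDm.aestronglyMeasurable.restrict
      (Eventually.of_forall fun h => hDb h)
  -- main identity
  have hmain : ((μ FK).toReal⁻¹ • ∫ g in FK, π g⁻¹ x ∂μ) -
      ((μ FK).toReal⁻¹ • ∫ g in FK, π g⁻¹ ((μ FN).toReal⁻¹ • ∫ h in FN, π h⁻¹ x ∂μ) ∂μ)
      = cK • cN • ∫ h in FN, D h ∂μ := by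
    have h2 : ∫ g in FK, π g⁻¹ ((μ FN).toReal⁻¹ • ∫ h in FN, π h⁻¹ x ∂μ) ∂μ
        = cN • ∫ h in FN, ∫ g in FK, f (h * g) ∂μ ∂μ := by
      calc ∫ g in FK, π g⁻¹ (cN • ∫ h in FN, f h ∂μ) ∂μ
          = ∫ g in FK, cN • ∫ h in FN, f (h * g) ∂μ ∂μ :=
            setIntegral_congr_fun hFKm fun g _ => hinner g
        _ = cN • ∫ g in FK, ∫ h in FN, f (h * g) ∂μ ∂μ := integral_smul cN _
        _ = cN • ∫ h in FN, ∫ g in FK, f (h * g) ∂μ ∂μ := by rw [hswap]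
    have h1 : ∫ g in FK, f g ∂μ = cN • ∫ _h in FN, (∫ g in FK, f g ∂μ) ∂μ := by
      rw [setIntegral_const, smul_smul, hcN, measureReal_def, inv_mul_cancel₀ hμNpos.ne', one_smul]
    rw [h2, ← smul_sub]
    congr 1
    rw [h1, ← smul_sub]
    congr 1
    rw [← integral_sub (integrableOn_const (C := ∫ g in FK, f g ∂μ) hFNfin.ne)
      (Integrable.mono' (integrableOn_const hFNfin.ne)
        hIm.aestronglyMeasurable.restrict (Eventually.of_forall fun h => hIb h))]
  rw [hmain]
  -- bound the integral of D
  have hsplitN : ∫ h in FN, D h ∂μ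
      = (∫ h in FN', D h ∂μ) + ∫ h in FN \ FN', D h ∂μ := by
    rw [← setIntegral_union Set.disjoint_sdiff_right (hFNm.diff hFN'meas)
      ((hDint FN hFNfin).mono_set hFN'sub)
      ((hDint FN hFNfin).mono_set Set.diff_subset), Set.union_diff_cancel hFN'sub]
  have hFN'fin : μ FN' < ⊤ := lt_of_le_of_lt (measure_mono hFN'sub) hFNfin
  have hdfin : μ (FN \ FN') < ⊤ := lt_of_le_of_lt (measure_mono Set.diff_subset) hFNfin
  have hb1 : ‖∫ h in FN', D h ∂μ‖ ≤ (η * (μ FK).toReal * ‖x‖) * (μ FN).toReal := by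
    refine le_trans (norm_setIntegral_le_of_norm_le_const hFN'fin
      (fun h hh => key h hh)) ?_
    have hmono : (μ FN').toReal ≤ (μ FN).toReal :=
      ENNReal.toReal_mono hFNfin.ne (measure_mono hFN'sub)
    have hC : 0 ≤ η * (μ FK).toReal * ‖x‖ := by positivity
    exact mul_le_mul_of_nonneg_left hmono hC
  have hb2 : ‖∫ h in FN \ FN', D h ∂μ‖
      ≤ (2 * (‖x‖ * (μ FK).toReal)) * (η * (μ FN).toReal) := by
    refine le_trans (norm_setIntegral_le_of_norm_le_const hdfin
      (fun h _ => hDb h)) ?_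
    have hfin : ENNReal.ofReal η * μ FN < ⊤ :=
      ENNReal.mul_lt_top ENNReal.ofReal_lt_top hFNfin
    have hmono : (μ (FN \ FN')).toReal ≤ η * (μ FN).toReal := by
      calc (μ (FN \ FN')).toReal ≤ (ENNReal.ofReal η * μ FN).toReal :=
          ENNReal.toReal_mono hfin.ne hFN'small.le
        _ = η * (μ FN).toReal := by
            rw [ENNReal.toReal_mul, ENNReal.toReal_ofReal hη.le]
    have hC : (0:ℝ) ≤ 2 * (‖x‖ * (μ FK).toReal) := by positivity
    exact mul_le_mul_of_nonneg_left hmono hC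
  have hInorm : ‖∫ h in FN, D h ∂μ‖ ≤ 3 * η * (μ FK).toReal * (μ FN).toReal * ‖x‖ := by
    rw [hsplitN]
    calc ‖(∫ h in FN', D h ∂μ) + ∫ h in FN \ FN', D h ∂μ‖
        ≤ ‖∫ h in FN', D h ∂μ‖ + ‖∫ h in FN \ FN', D h ∂μ‖ := norm_add_le _ _
      _ ≤ (η * (μ FK).toReal * ‖x‖) * (μ FN).toReal
          + (2 * (‖x‖ * (μ FK).toReal)) * (η * (μ FN).toReal) := add_le_add hb1 hb2
      _ = 3 * η * (μ FK).toReal * (μ FN).toReal * ‖x‖ := by ring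
  calc ‖cK • cN • ∫ h in FN, D h ∂μ‖ = cK * (cN * ‖∫ h in FN, D h ∂μ‖) := by
        rw [norm_smul, norm_smul, Real.norm_eq_abs, Real.norm_eq_abs,
          abs_of_nonneg (by positivity : (0:ℝ) ≤ cK),
          abs_of_nonneg (by positivity : (0:ℝ) ≤ cN)]
    _ ≤ cK * (cN * (3 * η * (μ FK).toReal * (μ FN).toReal * ‖x‖)) := by
        have hcK0 : (0:ℝ) ≤ cK := by positivity
        have hcN0 : (0:ℝ) ≤ cN := by positivity
        exact mul_le_mul_of_nonneg_left (mul_le_mul_of_nonneg_left hInorm hcN0) hcK0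
    _ = 3 * η * ‖x‖ := by
        rw [hcK, hcN]
        field_simp

/-- Continuous averaging lemma: if most `h ∈ F_N` move `F_K` by less than `η·m(F_K)`, then
`‖A_K x − A_K A_N x‖ ≤ 3η‖x‖`. -/
theorem stmt_15 {G : Type*} [Group G] [TopologicalSpace G] [IsTopologicalGroup G]
    [LocallyCompactSpace G] [SecondCountableTopology G]
    [MeasurableSpace G] [BorelSpace G]
    (μ : Measure G) [μ.IsHaarMeasure]
    {B : Type*} [NormedAddCommGroup B] [NormedSpace ℝ B] [CompleteSpace B]
    (π : G →* (B →L[ℝ] B)) (hπ : ∀ g : G, ‖π g‖ ≤ 1)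
    (hmeas : ∀ x : B, StronglyMeasurable fun g => π g x)
    (FN FK : Set G) (hFNc : IsCompact FN) (hFKc : IsCompact FK)
    (hFNpos : 0 < μ FN) (hFNfin : μ FN < ⊤) (hFKpos : 0 < μ FK) (hFKfin : μ FK < ⊤)
    (η : ℝ) (hη : 0 < η)
    (FN' : Set G) (hFN'sub : FN' ⊆ FN) (hFN'meas : MeasurableSet FN')
    (hFN'small : μ (FN \ FN') < ENNReal.ofReal η * μ FN)
    (hfolner : ∀ h ∈ FN', μ (symmDiff FK (h • FK)) < ENNReal.ofReal η * μ FK)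
    (x : B) :
    ‖((μ FK).toReal⁻¹ • ∫ g in FK, π g⁻¹ x ∂μ) -
      ((μ FK).toReal⁻¹ • ∫ g in FK, π g⁻¹ ((μ FN).toReal⁻¹ • ∫ h in FN, π h⁻¹ x ∂μ) ∂μ)‖
      ≤ 3 * η * ‖x‖ := by
  set K : Set G := closure FK with hK_def
  set N : Set G := closure FN with hN_def
  have hKc : IsCompact K := hFKc.closure
  have hNc : IsCompact N := hFNc.closure
  have hresK : μ.restrict K = μ.restrict FK := stmt_15_restrict_closure μ hFKc
  have hresN : μ.restrict N = μ.restrict FN := stmt_15_restrict_closure μ hFNc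
  have hμK : μ K = μ FK := hFKc.measure_closure μ
  have hμN : μ N = μ FN := hFNc.measure_closure μ
  have hsmcl : ∀ h : G, closure (h • FK) = h • K := by
    intro h
    have := (Homeomorph.mulLeft h).image_closure FK
    simpa [← Set.image_smul, smul_eq_mul] using this.symm
  -- measurability of h • K
  have hKm : MeasurableSet K := isClosed_closure.measurableSet
  have hNm : MeasurableSet N := isClosed_closure.measurableSet
  have hKsm : ∀ h : G, MeasurableSet (h • K) := by
    intro h
    rw [← hsmcl h]
    exact isClosed_closure.measurableSet
  have hKsfin : ∀ h : G, μ (h • K) < ⊤ := by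
    intro h
    rw [← hsmcl h]
    exact ((hFKc.smul h).closure).measure_lt_top
  -- transfer the Følner condition
  have hfolner' : ∀ h ∈ FN', μ (symmDiff K (h • K)) < ENNReal.ofReal η * μ K := by
    intro h hh
    rw [hμK]
    refine lt_of_le_of_lt ?_ (hfolner h hh)
    rw [← hsmcl h]
    exact stmt_15_symmDiff_closure μ hFKc (hFKc.smul h)
  -- transfer smallness of FN'
  have hFN'subN : FN' ⊆ N := hFN'sub.trans subset_closure
  have hsmall' : μ (N \ FN') < ENNReal.ofReal η * μ N := by
    rw [hμN]
    have h1 : μ (N \ FN') = μ (FN \ FN') := by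
      have := congrArg (fun ν : MeasureTheory.Measure G => ν FN'ᶜ) hresN
      simpa [Measure.restrict_apply hFN'meas.compl, Set.diff_eq, Set.inter_comm] using this
    rw [h1]
    exact hFN'small
  have := stmt_15_aux μ π hπ hmeas N K hNm hKm hKsm
    (hμN ▸ hFNpos) (hμN ▸ hFNfin) (hμK ▸ hFKpos) (hμK ▸ hFKfin) hKsfin
    η hη FN' hFN'subN hFN'meas hsmall' hfolner' x
  · rw [hμK, hμN] at this
    have e1 : ∫ g in K, π g⁻¹ x ∂μ = ∫ g in FK, π g⁻¹ x ∂μ := by rw [hresK]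
    have e2 : ∫ h in N, π h⁻¹ x ∂μ = ∫ h in FN, π h⁻¹ x ∂μ := by rw [hresN]
    rw [e1, e2, show (∫ g in K, π g⁻¹ ((μ FN).toReal⁻¹ • ∫ h in FN, π h⁻¹ x ∂μ) ∂μ)
      = ∫ g in FK, π g⁻¹ ((μ FN).toReal⁻¹ • ∫ h in FN, π h⁻¹ x ∂μ) ∂μ from by rw [hresK]]
      at this
    exact this
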